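/- Let μ be a probability sequence on ℕ (μ_i ≥ 0, Σ μ_i = 1). For a real sequence f with Σ μ_i f_i² < ∞, define Ent_μ(f²) = Σ_i μ_i f_i² log(f_i²/Σ_j μ_j f_j²) and L(f) = sup_{α∈ℝ} Ent_μ((f+α)²). Then Ent_μ(f²) ≤ L(f) ≤ Ent_μ(f²) + 2·Σ_i μ_i f_i². -/

import Mathlib

open Real

noncomputable def T5 (x : ℝ) : ℝ := 1 + x + x^2/2 + x^3/6 + x^4/24 + x^5/120

lemma hasDerivAt_T5 (x : ℝ) : HasDerivAt T5 (1 + x + x^2/2 + x^3/6 + x^4/24) x := by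
  have h : HasDerivAt (fun y : ℝ => 1 + y + y^2/2 + y^3/6 + y^4/24 + y^5/120)
      (0 + 1 + (2:ℕ) * x ^ 1 / 2 + (3:ℕ) * x ^ 2 / 6 + (4:ℕ) * x ^ 3 / 24 + (5:ℕ) * x ^ 4 / 120) x := by
    exact (((((hasDerivAt_const x (1:ℝ)).add (hasDerivAt_id x)).add
      ((hasDerivAt_pow 2 x).div_const 2)).add ((hasDerivAt_pow 3 x).div_const 6)).add
      ((hasDerivAt_pow 4 x).div_const 24)).add ((hasDerivAt_pow 5 x).div_const 120)
  exact h.congr_deriv (by push_cast; ring)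

lemma T5_le_exp (x : ℝ) : T5 x ≤ Real.exp x := by
  have hg : ∀ y : ℝ, HasDerivAt (fun z => Real.exp (-z) * T5 z)
      (Real.exp (-y) * (-(y^5/120))) y := by
    intro y
    have h1 : HasDerivAt (fun z : ℝ => Real.exp (-z)) (-Real.exp (-y)) y := by
      simpa using ((hasDerivAt_id y).neg).exp
    have := h1.mul (hasDerivAt_T5 y)
    exact this.congr_deriv (by unfold T5; ring)
  have hdiff : Differentiable ℝ (fun z => Real.exp (-z) * T5 z) := fun y => (hg y).differentiableAt
  have hg0 : Real.exp (-(0:ℝ)) * T5 0 = 1 := by norm_num [T5]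
  have hle : Real.exp (-x) * T5 x ≤ 1 := by
    rcases le_or_gt x 0 with hx | hx
    · have hmono : MonotoneOn (fun z => Real.exp (-z) * T5 z) (Set.Iic 0) := by
        apply monotoneOn_of_deriv_nonneg (convex_Iic 0) hdiff.continuous.continuousOn
          (hdiff.differentiableOn)
        intro y hy
        rw [(hg y).deriv]
        have hy0 : y < 0 := by simpa using hy
        have : 0 ≤ -(y^5/120) := by nlinarith [pow_pos (neg_pos.mpr hy0) 5]
        positivity
      have := hmono (Set.mem_Iic.mpr hx) (Set.mem_Iic.mpr le_rfl) hx
      simp only [Real.exp_zero] at this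
      calc Real.exp (-x) * T5 x ≤ Real.exp (-0) * T5 0 := this
        _ = 1 := hg0
    · have hanti : AntitoneOn (fun z => Real.exp (-z) * T5 z) (Set.Ici 0) := by
        apply antitoneOn_of_deriv_nonpos (convex_Ici 0) hdiff.continuous.continuousOn
          (hdiff.differentiableOn)
        intro y hy
        rw [(hg y).deriv]
        have hy0 : 0 < y := by simpa using hy
        have h5 : 0 ≤ y^5/120 := by positivity
        have : Real.exp (-y) * (-(y^5/120)) ≤ 0 := by
          apply mul_nonpos_of_nonneg_of_nonpos (Real.exp_pos _).le
          linarith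
        exact this
      have := hanti (Set.mem_Ici.mpr le_rfl) (Set.mem_Ici.mpr hx.le) hx.le
      calc Real.exp (-x) * T5 x ≤ Real.exp (-0) * T5 0 := this
        _ = 1 := hg0
  have hex : (0:ℝ) < Real.exp x := Real.exp_pos x
  have := mul_le_mul_of_nonneg_left hle hex.le
  calc T5 x = Real.exp x * (Real.exp (-x) * T5 x) := by
        rw [← mul_assoc, ← Real.exp_add]; simp
    _ ≤ Real.exp x * 1 := this
    _ = Real.exp x := mul_one _

lemma pade_aux (t : ℝ) (ht : 0 ≤ t) : (1 - t) * Real.exp t ≤ (1 + t) * Real.exp (-t) := by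
  have hg : ∀ y : ℝ, HasDerivAt (fun z => (1 + z) * Real.exp (-z) - (1 - z) * Real.exp z)
      (y * (Real.exp y - Real.exp (-y))) y := by
    intro y
    have h1 : HasDerivAt (fun z : ℝ => Real.exp (-z)) (-Real.exp (-y)) y := by
      simpa using ((hasDerivAt_id y).neg).exp
    have h2 : HasDerivAt (fun z : ℝ => (1 + z)) (1 : ℝ) y := by
      exact (hasDerivAt_id y).const_add (1:ℝ)
    have h3 : HasDerivAt (fun z : ℝ => (1 - z)) (-1 : ℝ) y := by
      exact (hasDerivAt_id y).const_sub (1:ℝ)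
    have := (h2.mul h1).sub (h3.mul (Real.hasDerivAt_exp y))
    exact this.congr_deriv (by ring)
  have hdiff : Differentiable ℝ (fun z => (1 + z) * Real.exp (-z) - (1 - z) * Real.exp z) :=
    fun y => (hg y).differentiableAt
  have hmono : MonotoneOn (fun z => (1 + z) * Real.exp (-z) - (1 - z) * Real.exp z)
      (Set.Ici 0) := by
    apply monotoneOn_of_deriv_nonneg (convex_Ici 0) hdiff.continuous.continuousOn
      hdiff.differentiableOn
    intro y hy
    rw [(hg y).deriv]
    have hy0 : 0 < y := by simpa using hy
    have : Real.exp (-y) ≤ Real.exp y := Real.exp_le_exp.mpr (by linarith)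
    nlinarith
  have h0 := hmono (Set.mem_Ici.mpr le_rfl) (Set.mem_Ici.mpr ht) ht
  simp only [Real.exp_zero] at h0
  norm_num at h0
  linarith

lemma pade {x : ℝ} (hx : 1 ≤ x) : 2 * (x - 1) / (x + 1) ≤ Real.log x := by
  set t := (x - 1) / (x + 1) with htdef
  have hx1 : (0:ℝ) < x + 1 := by linarith
  have ht0 : 0 ≤ t := div_nonneg (by linarith) (by linarith)
  have ht1 : t < 1 := by
    rw [htdef, div_lt_one hx1]; linarith
  have hxt : (1 + t) / (1 - t) = x := by
    rw [htdef]; field_simp; ring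
  have key := pade_aux t ht0
  have h2 : Real.exp (2 * t) ≤ x := by
    have he : (0:ℝ) < Real.exp t := Real.exp_pos t
    have h1t : (0:ℝ) < 1 - t := by linarith
    have : (1 - t) * (Real.exp t * Real.exp t) ≤ (1 + t) := by
      have := mul_le_mul_of_nonneg_right key he.le
      calc (1 - t) * (Real.exp t * Real.exp t) = (1 - t) * Real.exp t * Real.exp t := by ring
        _ ≤ (1 + t) * Real.exp (-t) * Real.exp t := this
        _ = 1 + t := by rw [mul_assoc, ← Real.exp_add]; simp
    have hexp2 : Real.exp (2 * t) = Real.exp t * Real.exp t := by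
      rw [two_mul, Real.exp_add]
    rw [hexp2, ← hxt, le_div_iff₀ h1t]
    linarith
  have hfin := (Real.le_log_iff_exp_le (by linarith : (0:ℝ) < x)).mpr h2
  calc 2 * (x - 1) / (x + 1) = 2 * t := by rw [htdef]; ring
    _ ≤ Real.log x := hfin

lemma log3_le : Real.log 3 ≤ 23/20 := by
  rw [Real.log_le_iff_le_exp (by norm_num)]
  have h1 : Real.exp (23/20 : ℝ) = Real.exp 1 * Real.exp (3/20) := by
    rw [← Real.exp_add]; norm_num
  have h2 : (3:ℝ)/20 + 1 ≤ Real.exp (3/20) := Real.add_one_le_exp _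
  have h3 : (2.7182818283 : ℝ) < Real.exp 1 := Real.exp_one_gt_d9
  rw [h1]
  nlinarith [Real.exp_pos (3/20 : ℝ)]

lemma log32_le : Real.log (3/2) ≤ 1/2 := by
  rw [Real.log_le_iff_le_exp (by norm_num)]
  have h1 : Real.exp ((1:ℝ)/2) * Real.exp ((1:ℝ)/2) = Real.exp 1 := by
    rw [← Real.exp_add]; norm_num
  have h3 : (2.7182818283 : ℝ) < Real.exp 1 := Real.exp_one_gt_d9
  nlinarith [Real.exp_pos ((1:ℝ)/2)]


set_option maxHeartbeats 2000000 in
lemma key (L : ℝ) : L^2 ≤ (Real.exp L - 1 - L) * (2 - L + Real.log ((Real.exp L + 2)/3)) := by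
  set u := Real.exp L with hudef
  have hu : 0 < u := Real.exp_pos L
  have hw : L + 1 ≤ u := Real.add_one_le_exp L
  rcases le_or_gt L 0 with hL | hL
  · -- negative side
    have hu2 : (0:ℝ) < u + 2 := by linarith
    have hlog : (u - 1)/(u + 2) ≤ Real.log ((u + 2)/3) := by
      have h1 := Real.log_le_sub_one_of_pos (show (0:ℝ) < 3/(u+2) by positivity)
      have h2 : Real.log ((u+2)/3) = - Real.log (3/(u+2)) := by
        rw [← Real.log_inv]; congr 1; rw [inv_div]
      have h3 : (u - 1)/(u + 2) = 1 - 3/(u+2) := by rw [eq_sub_iff_add_eq]; field_simp; ring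
      rw [h2, h3]
      have h4 : 3/(u+2) - 1 = -(1 - 3/(u+2)) := by ring
      linarith
    have hcore : L^2 * (u + 2) ≤ (u - 1 - L) * ((2 - L) * (u + 2) + (u - 1)) := by
      rcases le_or_gt L (-3) with h3 | h3
      · nlinarith [mul_pos hu hu, hu]
      · rcases le_or_gt L (-1) with h1 | h1
        · -- L ∈ [-3,-1]
          set B := (3678794/10000000 : ℝ) * T5 (L+1) with hBdef
          have hM1 : (-2:ℝ) ≤ L + 1 := by linarith
          have hM2 : L + 1 ≤ 0 := by linarith
          have hT0 : 0 ≤ T5 (L+1) := by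
            unfold T5; nlinarith [sq_nonneg (L+1), sq_nonneg ((L+1)^2), sq_nonneg ((L+1)+1)]
          have hcinv : (3678794/10000000 : ℝ) ≤ (Real.exp 1)⁻¹ := by
            have hee : (3678794/10000000 : ℝ) * Real.exp 1 ≤ 1 := by
              nlinarith [Real.exp_one_lt_d9, Real.exp_pos 1]
            calc (3678794/10000000 : ℝ)
                = 3678794/10000000 * Real.exp 1 * (Real.exp 1)⁻¹ := by
                  rw [mul_assoc, mul_inv_cancel₀ (ne_of_gt (Real.exp_pos 1)), mul_one]
              _ ≤ 1 * (Real.exp 1)⁻¹ :=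
                  mul_le_mul_of_nonneg_right hee (by positivity)
              _ = (Real.exp 1)⁻¹ := one_mul _
          have hBle : B ≤ u := by
            have he1 : T5 (L+1) ≤ Real.exp (L+1) := T5_le_exp (L+1)
            have : B ≤ (Real.exp 1)⁻¹ * T5 (L+1) := by
              rw [hBdef]; exact mul_le_mul_of_nonneg_right hcinv hT0
            have h2 : (Real.exp 1)⁻¹ * T5 (L+1) ≤ (Real.exp 1)⁻¹ * Real.exp (L+1) :=
              mul_le_mul_of_nonneg_left he1 (by positivity)
            have h3 : (Real.exp 1)⁻¹ * Real.exp (L+1) = u := by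
              rw [hudef, ← Real.exp_neg, ← Real.exp_add]; ring_nf
            linarith
          have hB0 : 0 ≤ B := by rw [hBdef]; positivity
          have hP2 : 0 ≤ (3 - L)*B^2 - 4*L*B - (3+L) := by
            rw [hBdef]; unfold T5
            nlinarith [sq_nonneg (L+1), sq_nonneg ((L+1)+2), sq_nonneg ((L+1)*((L+1)+2)),
              mul_nonneg (neg_nonneg.mpr hM2) (by linarith : (0:ℝ) ≤ L + 3),
              sq_nonneg ((L+1)^2*((L+1)+2)), sq_nonneg ((L+1)^3)]
          have hfact : 0 ≤ (3 - L)*(u + B) - 4*L := by nlinarith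
          have hprod : 0 ≤ (u - B)*((3 - L)*(u + B) - 4*L) :=
            mul_nonneg (by linarith) hfact
          nlinarith [hP2, hprod]
        · -- L ∈ [-1,0]
          have hT : T5 L ≤ u := T5_le_exp L
          have hT0 : 0 ≤ T5 L := by unfold T5; nlinarith [sq_nonneg L, sq_nonneg (L^2)]
          have hbr : 0 ≤ 1/30 + L/24 + 7*L^2/360 + 5*L^3/576 + 7*L^4/2880 + 7*L^5/14400
              + L^6/14400 := by
            nlinarith [sq_nonneg L, mul_nonneg (neg_nonneg.mpr hL) (by linarith : (0:ℝ) ≤ L+1),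
              sq_nonneg (L^2), sq_nonneg (L^3), sq_nonneg (L*(L+1))]
          have hQT : 0 ≤ (3 - L)*(T5 L)^2 - 4*L*(T5 L) - (3+L) := by
            have hid : (3 - L)*(T5 L)^2 - 4*L*(T5 L) - (3+L) =
                (-L^5) * (1/30 + L/24 + 7*L^2/360 + 5*L^3/576 + 7*L^4/2880 + 7*L^5/14400
                  + L^6/14400) := by
              unfold T5; ring
            rw [hid]
            apply mul_nonneg _ hbr
            have h5 : (0:ℝ) ≤ (-L)^5 := pow_nonneg (neg_nonneg.mpr hL) 5
            nlinarith [h5]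
          have hfact : 0 ≤ (3 - L)*(u + T5 L) - 4*L := by nlinarith
          have hprod : 0 ≤ (u - T5 L)*((3 - L)*(u + T5 L) - 4*L) :=
            mul_nonneg (by linarith) hfact
          nlinarith [hQT, hprod]
    calc L^2 = (L^2 * (u+2))/(u+2) := by
          rw [mul_div_assoc, div_self (ne_of_gt hu2), mul_one]
      _ ≤ ((u - 1 - L) * ((2 - L) * (u + 2) + (u - 1)))/(u+2) := by
          gcongr
      _ = (u - 1 - L) * (((2 - L) * (u + 2) + (u - 1))/(u+2)) := mul_div_assoc _ _ _
      _ = (u - 1 - L) * ((2 - L) + (u-1)/(u+2)) := by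
          rw [add_div, mul_div_assoc, div_self (ne_of_gt hu2), mul_one]
      _ ≤ (u - 1 - L) * (2 - L + Real.log ((u+2)/3)) := by
          apply mul_le_mul_of_nonneg_left (by linarith) (by linarith)
  · -- positive side
    have hu1 : (1:ℝ) ≤ u := by rw [hudef]; exact Real.one_le_exp hL.le
    rcases le_or_gt L (5/2) with hL2 | hL2
    · -- L ∈ [0, 5/2]
      have hu5 : (0:ℝ) < u + 5 := by linarith
      have hlog : 2*(u - 1)/(u + 5) ≤ Real.log ((u + 2)/3) := by
        have hx : (1:ℝ) ≤ (u + 2)/3 := by linarith [(by linarith : (3:ℝ) ≤ u + 2)]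
        have hp := pade hx
        have h0 : (u + 2)/3 + 1 = (u+5)/3 := by ring
        have h1 : (u + 2)/3 - 1 = (u-1)/3 := by ring
        rw [h0, h1, mul_div_assoc'] at hp
        have h2 : 2*(u - 1)/3/((u + 5)/3) = 2*(u - 1)/(u + 5) := by
          rw [div_div_div_comm, div_self (by norm_num : (3:ℝ) ≠ 0), div_one]
        rw [h2] at hp
        exact hp
      have hcore : L^2 * (u + 5) ≤ (u - 1 - L) * ((2 - L) * (u + 5) + 2*(u - 1)) := by
        have hT : T5 L ≤ u := T5_le_exp L
        have hT1 : 1 + L + L^2/2 ≤ T5 L := by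
          unfold T5
          nlinarith [pow_nonneg hL.le 3, pow_nonneg hL.le 4, pow_nonneg hL.le 5]
        have hpp : 0 ≤ 1/6 + L/10 + L^2/90 + L^3/360 - L^4/240 - L^5/576 - L^6/2400
            - L^7/14400 := by
          nlinarith [sq_nonneg L, sq_nonneg (L^2), sq_nonneg (L^3), mul_nonneg hL.le hL.le,
            mul_nonneg (mul_nonneg hL.le hL.le) hL.le, sq_nonneg (L*(5/2 - L)),
            mul_nonneg (pow_nonneg hL.le 4) (by linarith : (0:ℝ) ≤ 5/2 - L),
            mul_nonneg (pow_nonneg hL.le 5) (by linarith : (0:ℝ) ≤ 5/2 - L)]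
        have hQT : 0 ≤ (4 - L)*(T5 L)^2 + (4 - 8*L)*(T5 L) - (8 + 3*L) := by
          have hid : (4 - L)*(T5 L)^2 + (4 - 8*L)*(T5 L) - (8 + 3*L) =
              L^4 * (1/6 + L/10 + L^2/90 + L^3/360 - L^4/240 - L^5/576 - L^6/2400
                - L^7/14400) := by
            unfold T5; ring
          rw [hid]
          exact mul_nonneg (by positivity) hpp
        have hfact : 0 ≤ (4 - L)*(u + T5 L) + (4 - 8*L) := by nlinarith [hT, hT1]
        have hprod : 0 ≤ (u - T5 L)*((4 - L)*(u + T5 L) + (4 - 8*L)) :=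
          mul_nonneg (by linarith) hfact
        nlinarith [hQT, hprod]
      calc L^2 = (L^2 * (u+5))/(u+5) := by
            rw [mul_div_assoc, div_self (ne_of_gt hu5), mul_one]
        _ ≤ ((u - 1 - L) * ((2 - L) * (u + 5) + 2*(u - 1)))/(u+5) := by
            gcongr
        _ = (u - 1 - L) * (((2 - L) * (u + 5) + 2*(u - 1))/(u+5)) := mul_div_assoc _ _ _
        _ = (u - 1 - L) * ((2 - L) + 2*(u-1)/(u+5)) := by
            rw [add_div, mul_div_assoc, div_self (ne_of_gt hu5), mul_one]
        _ ≤ (u - 1 - L) * (2 - L + Real.log ((u+2)/3)) := by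
            have hwn : 0 ≤ u - 1 - L := by linarith
            exact mul_le_mul_of_nonneg_left (by linarith) hwn
    · -- L > 5/2
      have hlog : L - 23/20 ≤ Real.log ((u + 2)/3) := by
        have h1 : Real.log (u/3) ≤ Real.log ((u + 2)/3) := by
          apply Real.log_le_log (by positivity)
          linarith
        have h2 : Real.log (u/3) = L - Real.log 3 := by
          rw [Real.log_div (ne_of_gt hu) (by norm_num), hudef, Real.log_exp]
        linarith [log3_le]
      have hwT : L^2/2 + L^3/6 + L^4/24 + L^5/120 ≤ u - 1 - L := by
        have := T5_le_exp L
        unfold T5 at this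
        rw [← hudef] at this
        linarith
      have hw0 : 0 ≤ u - 1 - L := by
        have h5 : (0:ℝ) ≤ L^2/2 + L^3/6 + L^4/24 + L^5/120 := by positivity
        linarith
      calc L^2 ≤ (17/20) * (L^2/2 + L^3/6 + L^4/24 + L^5/120) := by
            nlinarith [mul_pos (mul_pos hL hL) hL, mul_pos hL hL,
              mul_pos (mul_pos (mul_pos hL hL) hL) hL]
        _ ≤ (17/20) * (u - 1 - L) := by linarith [mul_le_mul_of_nonneg_left hwT (by norm_num : (0:ℝ) ≤ 17/20)]
        _ ≤ (u - 1 - L) * (2 - L + Real.log ((u+2)/3)) := by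
            have hF : 17/20 ≤ 2 - L + Real.log ((u+2)/3) := by linarith
            calc (17/20) * (u - 1 - L) = (u - 1 - L) * (17/20) := mul_comm _ _
              _ ≤ (u - 1 - L) * (2 - L + Real.log ((u+2)/3)) :=
                  mul_le_mul_of_nonneg_left hF hw0

lemma master (α x N : ℝ) (hN : 0 < N) :
    (x+α)^2 * Real.log ((x+α)^2/N) ≤
      α^2*((x+α)^2/N - 1) + 2*x^2 + x^2 * Real.log (((x+α)^2/N + 2)/3) := by
  rcases eq_or_ne (x+α) 0 with h0 | h0
  · have hx2 : x^2 = α^2 := by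
      have hxa : x = -α := by linarith
      rw [hxa]; ring
    have hlog23 : -(1/2 : ℝ) ≤ Real.log (2/3) := by
      have : Real.log (2/3) = - Real.log (3/2) := by
        rw [← Real.log_inv]; norm_num
      linarith [log32_le]
    rw [h0]
    norm_num
    rw [hx2]
    nlinarith [sq_nonneg α, mul_le_mul_of_nonneg_left hlog23 (sq_nonneg α)]
  · set s := (x+α)^2/N with hsdef
    have hss : 0 < s := by
      rw [hsdef]; positivity
    set L := Real.log s with hLdef
    have hexp : Real.exp L = s := Real.exp_log hss
    have hkey := key L
    rw [hexp] at hkey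
    rcases eq_or_ne s 1 with h1 | h1
    · have hL0 : L = 0 := by rw [hLdef, h1, Real.log_one]
      rw [hL0, h1]
      have : Real.log ((1+2)/3) = 0 := by norm_num
      rw [this]
      nlinarith [sq_nonneg x]
    · have hw : 0 < s - 1 - L := by
        have := Real.log_lt_sub_one_of_pos hss h1
        rw [← hLdef] at this
        linarith
      have hamgm : 2*(α*(x*L)) ≤ α^2*(s-1-L) + x^2*L^2/(s-1-L) := by
        have hident : α^2*(s-1-L) + x^2*L^2/(s-1-L) - 2*(α*(x*L)) =
            (α*(s-1-L) - x*L)^2 / (s-1-L) := by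
          field_simp
          ring
        nlinarith [div_nonneg (sq_nonneg (α*(s-1-L) - x*L)) hw.le, hident]
      have hdiv : x^2*L^2/(s-1-L) ≤ x^2*(2 - L + Real.log ((s+2)/3)) := by
        rw [div_le_iff₀ hw]
        nlinarith [mul_le_mul_of_nonneg_left hkey (sq_nonneg x)]
      nlinarith [hamgm, hdiv]

lemma log23_ge : -(1/2 : ℝ) ≤ Real.log (2/3) := by
  have h : Real.log (2/3 : ℝ) = -Real.log (3/2) := by
    rw [← Real.log_inv]; norm_num
  linarith [log32_le, h.ge, h.le]

set_option maxHeartbeats 1000000 in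
/-- Lemma 2.5 (Rothaus-type): `Ent_μ(f²) ≤ L(f) ≤ Ent_μ(f²) + 2 Σ μᵢ fᵢ²`,
where `L(f) = sup_α Ent_μ((f+α)²)`. -/
theorem rothaus_lemma (μ f : ℕ → ℝ)
    (hμ : ∀ i, 0 ≤ μ i) (hμsum : Summable μ) (hμ1 : ∑' i, μ i = 1)
    (hfs : Summable (fun i => μ i * f i ^ 2))
    (hsq : ∀ α : ℝ, Summable (fun i => μ i * (f i + α) ^ 2))
    (hent : ∀ α : ℝ, Summable (fun i => μ i * (f i + α) ^ 2 *
      Real.log ((f i + α) ^ 2 / ∑' j, μ j * (f j + α) ^ 2))) :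
    (∑' i, μ i * f i ^ 2 * Real.log (f i ^ 2 / ∑' j, μ j * f j ^ 2)) ≤
      (⨆ α : ℝ, ∑' i, μ i * (f i + α) ^ 2 *
        Real.log ((f i + α) ^ 2 / ∑' j, μ j * (f j + α) ^ 2)) ∧
    (⨆ α : ℝ, ∑' i, μ i * (f i + α) ^ 2 *
        Real.log ((f i + α) ^ 2 / ∑' j, μ j * (f j + α) ^ 2)) ≤
      (∑' i, μ i * f i ^ 2 * Real.log (f i ^ 2 / ∑' j, μ j * f j ^ 2)) +
        2 * ∑' i, μ i * f i ^ 2 := by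
  classical
  obtain ⟨K, hKdef⟩ : ∃ x, x = ∑' i, μ i * f i ^ 2 := ⟨_, rfl⟩
  rw [← hKdef]
  obtain ⟨E, hEdef⟩ : ∃ x, x = ∑' i, μ i * f i ^ 2 * Real.log (f i ^ 2 / K) := ⟨_, rfl⟩
  rw [← hEdef]
  have hK0 : 0 ≤ K := by
    rw [hKdef]; exact tsum_nonneg (fun i => mul_nonneg (hμ i) (sq_nonneg (f i)))
  have hE0 : Summable (fun i => μ i * f i ^ 2 * Real.log (f i ^ 2 / K)) := by
    have h := hent 0
    simp only [add_zero] at h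
    rw [← hKdef] at h
    exact h
  -- E is nonnegative
  have hE_nonneg : 0 ≤ E := by
    rcases eq_or_lt_of_le hK0 with hK | hK
    · have hz : ∀ i, μ i * f i ^ 2 = 0 := by
        intro i
        have h1 := hfs.le_tsum i (fun j _ => mul_nonneg (hμ j) (sq_nonneg _))
        have h2 := mul_nonneg (hμ i) (sq_nonneg (f i))
        rw [← hKdef] at h1
        linarith
      have : E = 0 := by
        rw [hEdef]
        have h0 : ∀ i, μ i * f i ^ 2 * Real.log (f i ^ 2 / K) = 0 := by
          intro i; rw [hz i, zero_mul]
        rw [tsum_congr h0, tsum_zero]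
      linarith
    · have hpt : ∀ i, μ i * f i ^ 2 - K * μ i ≤ μ i * f i ^ 2 * Real.log (f i ^ 2 / K) := by
        intro i
        rcases eq_or_ne (μ i) 0 with hm | hm
        · rw [hm]; simp
        · rcases eq_or_ne (f i) 0 with hf | hf
          · rw [hf]
            have := mul_nonneg hK.le (hμ i)
            simp
            nlinarith
          · have hf2 : 0 < f i ^ 2 := by positivity
            have hlog := Real.log_le_sub_one_of_pos (show (0:ℝ) < K / f i ^ 2 by positivity)
            have hmin : Real.log (K / f i ^ 2) = -Real.log (f i ^ 2 / K) := by
              rw [Real.log_div (ne_of_gt hK) hf2.ne', Real.log_div hf2.ne' (ne_of_gt hK)]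
              ring
            rw [hmin] at hlog
            -- 1 - K/f² ≤ log(f²/K)
            have hmul := mul_le_mul_of_nonneg_left (by linarith : 1 - K / f i ^ 2 ≤
              Real.log (f i ^ 2 / K)) (mul_nonneg (hμ i) (sq_nonneg (f i)))
            have hident : μ i * f i ^ 2 * (1 - K / f i ^ 2) = μ i * f i ^ 2 - K * μ i := by
              field_simp
            calc μ i * f i ^ 2 - K * μ i = μ i * f i ^ 2 * (1 - K / f i ^ 2) := hident.symm
              _ ≤ μ i * f i ^ 2 * Real.log (f i ^ 2 / K) := hmul
      have hsl : Summable (fun i => μ i * f i ^ 2 - K * μ i) := hfs.sub (hμsum.mul_left K)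
      have h1 := Summable.tsum_le_tsum hpt hsl hE0
      have h2 : ∑' i, (μ i * f i ^ 2 - K * μ i) = K - K := by
        rw [Summable.tsum_sub hfs (hμsum.mul_left K), tsum_mul_left, hμ1, mul_one, ← hKdef]
      rw [h2] at h1
      rw [hEdef]
      linarith
  -- the per-alpha bound
  have per : ∀ α : ℝ, (∑' i, μ i * (f i + α) ^ 2 *
      Real.log ((f i + α) ^ 2 / ∑' j, μ j * (f j + α) ^ 2)) ≤ E + 2 * K := by
    intro α
    obtain ⟨N, hNdef⟩ : ∃ x, x = ∑' j, μ j * (f j + α) ^ 2 := ⟨_, rfl⟩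
    rw [← hNdef]
    have hterm : ∀ i, 0 ≤ μ i * (f i + α) ^ 2 := fun i => mul_nonneg (hμ i) (sq_nonneg _)
    have hN0 : 0 ≤ N := by rw [hNdef]; exact tsum_nonneg hterm
    rcases eq_or_lt_of_le hN0 with hN | hN
    · -- N = 0
      have hz : ∀ i, μ i * (f i + α) ^ 2 = 0 := by
        intro i
        have h1 := (hsq α).le_tsum i (fun j _ => hterm j)
        rw [← hNdef] at h1
        have := hterm i
        linarith
      have hzz : ∀ i, μ i * (f i + α) ^ 2 * Real.log ((f i + α) ^ 2 / N) = 0 := by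
        intro i; rw [hz i, zero_mul]
      rw [tsum_congr hzz, tsum_zero]
      linarith
    · rcases eq_or_lt_of_le hK0 with hK | hK
      · -- K = 0
        have hz : ∀ i, μ i * f i ^ 2 = 0 := by
          intro i
          have h1 := hfs.le_tsum i (fun j _ => mul_nonneg (hμ j) (sq_nonneg _))
          rw [← hKdef] at h1
          have := mul_nonneg (hμ i) (sq_nonneg (f i))
          linarith
        have hzf : ∀ i, μ i * f i = 0 := by
          intro i
          rcases mul_eq_zero.mp (hz i) with hm | hf
          · rw [hm, zero_mul]
          · rw [pow_eq_zero_iff (by norm_num : 2 ≠ 0)] at hf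
            rw [hf, mul_zero]
        have hNα : N = α ^ 2 := by
          rw [hNdef]
          have hpt : ∀ i, μ i * (f i + α) ^ 2 = α ^ 2 * μ i := by
            intro i
            have h1 : μ i * (f i + α) ^ 2 =
                μ i * f i ^ 2 + 2 * α * (μ i * f i) + α ^ 2 * μ i := by ring
            rw [h1, hz i, hzf i]; ring
          rw [tsum_congr hpt, tsum_mul_left, hμ1, mul_one]
        have hα2 : 0 < α ^ 2 := by rw [← hNα]; exact hN
        have hzz : ∀ i, μ i * (f i + α) ^ 2 * Real.log ((f i + α) ^ 2 / N) = 0 := by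
          intro i
          rcases eq_or_ne (μ i) 0 with hm | hm
          · rw [hm, zero_mul, zero_mul]
          · have hf : f i = 0 := by
              rcases mul_eq_zero.mp (hz i) with h | h
              · exact absurd h hm
              · rwa [pow_eq_zero_iff (by norm_num : 2 ≠ 0)] at h
            rw [hf, zero_add, hNα, div_self (ne_of_gt hα2), Real.log_one, mul_zero]
        rw [tsum_congr hzz, tsum_zero]
        linarith
      · -- main case : N > 0, K > 0
        have hNne : N ≠ 0 := ne_of_gt hN
        have hs_sum : Summable (fun i => μ i * (f i + α) ^ 2 / N) := (hsq α).div_const N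
        have hentN : Summable (fun i => μ i * (f i + α) ^ 2 *
            Real.log ((f i + α) ^ 2 / N)) := by
          have h := hent α; rw [← hNdef] at h; exact h
        -- summability of the log-g part
        have hgl : Summable (fun i => μ i * f i ^ 2 *
            Real.log (((f i + α) ^ 2 / N + 2) / 3)) := by
          rw [← summable_abs_iff]
          have hmaj : Summable (fun i => μ i * f i ^ 2 * (1/2)
              + 2 * |μ i * (f i + α) ^ 2 * Real.log ((f i + α) ^ 2 / N)|
              + 2 * α ^ 2 * (μ i * (f i + α) ^ 2 / N)) :=
            ((hfs.mul_right (1/2)).add (hentN.abs.mul_left 2)).add (hs_sum.mul_left (2 * α ^ 2))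
          apply Summable.of_nonneg_of_le (fun i => abs_nonneg _) _ hmaj
          intro i
          have hsnn : (0:ℝ) ≤ (f i + α) ^ 2 / N := div_nonneg (sq_nonneg _) hN.le
          have hmfnn : (0:ℝ) ≤ μ i * f i ^ 2 := mul_nonneg (hμ i) (sq_nonneg _)
          have hsnn2 : (0:ℝ) ≤ μ i * (f i + α) ^ 2 / N := div_nonneg (hterm i) hN.le
          rw [abs_mul, abs_of_nonneg hmfnn]
          rcases le_or_gt ((f i + α) ^ 2 / N) 1 with hs1 | hs1
          · have hgub : Real.log (((f i + α) ^ 2 / N + 2) / 3) ≤ 0 :=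
              Real.log_nonpos (by linarith) (by linarith)
            have h23 : (2/3:ℝ) ≤ ((f i + α) ^ 2 / N + 2) / 3 := by linarith
            have hglb := Real.log_le_log (by norm_num : (0:ℝ) < 2/3) h23
            have habs : |Real.log (((f i + α) ^ 2 / N + 2) / 3)| ≤ 1/2 :=
              abs_le.mpr ⟨by linarith [log23_ge], by linarith⟩
            have h1 := mul_le_mul_of_nonneg_left habs hmfnn
            have h2 : (0:ℝ) ≤ 2 * |μ i * (f i + α) ^ 2 * Real.log ((f i + α) ^ 2 / N)| := by
              positivity
            have h3 : (0:ℝ) ≤ 2 * α ^ 2 * (μ i * (f i + α) ^ 2 / N) := by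
              have := sq_nonneg α; nlinarith [hsnn2]
            linarith
          · have hspos : (0:ℝ) < (f i + α) ^ 2 / N := by linarith
            have hgub : Real.log (((f i + α) ^ 2 / N + 2) / 3) ≤
                Real.log ((f i + α) ^ 2 / N) :=
              Real.log_le_log (by linarith) (by linarith)
            have hgnn : (0:ℝ) ≤ Real.log (((f i + α) ^ 2 / N + 2) / 3) :=
              Real.log_nonneg (by linarith)
            have hLs : Real.log ((f i + α) ^ 2 / N) ≤ (f i + α) ^ 2 / N := by
              have := Real.log_le_sub_one_of_pos hspos; linarith
            have hLpos : (0:ℝ) < Real.log ((f i + α) ^ 2 / N) := Real.log_pos hs1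
            have hfb : f i ^ 2 ≤ 2 * (f i + α) ^ 2 + 2 * α ^ 2 := by
              nlinarith [sq_nonneg (f i + 2 * α)]
            rw [abs_of_nonneg hgnn]
            have h1 := mul_le_mul_of_nonneg_left hgub hmfnn
            have h2 := mul_le_mul_of_nonneg_right
              (mul_le_mul_of_nonneg_left hfb (hμ i)) hLpos.le
            have h3 := mul_le_mul_of_nonneg_left
              (mul_le_mul_of_nonneg_left hLs (hμ i)) (by positivity : (0:ℝ) ≤ 2 * α ^ 2)
            have h4 : μ i * (f i + α) ^ 2 * Real.log ((f i + α) ^ 2 / N) ≤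
                |μ i * (f i + α) ^ 2 * Real.log ((f i + α) ^ 2 / N)| := le_abs_self _
            have he : 2 * α ^ 2 * (μ i * (f i + α) ^ 2 / N)
                = 2 * α ^ 2 * (μ i * ((f i + α) ^ 2 / N)) := by rw [mul_div_assoc]
            linarith only [h1, h2, h3, h4, hmfnn, he]
        -- the master inequality, summed
        have hmaster : ∀ i, μ i * (f i + α) ^ 2 * Real.log ((f i + α) ^ 2 / N) ≤
            α ^ 2 * (μ i * (f i + α) ^ 2 / N) - α ^ 2 * μ i + 2 * (μ i * f i ^ 2)
              + μ i * f i ^ 2 * Real.log (((f i + α) ^ 2 / N + 2) / 3) := by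
          intro i
          have h := master α (f i) N hN
          have h2 := mul_le_mul_of_nonneg_left h (hμ i)
          calc μ i * (f i + α) ^ 2 * Real.log ((f i + α) ^ 2 / N)
              = μ i * ((f i + α) ^ 2 * Real.log ((f i + α) ^ 2 / N)) := by ring
            _ ≤ μ i * (α ^ 2 * ((f i + α) ^ 2 / N - 1) + 2 * f i ^ 2
                + f i ^ 2 * Real.log (((f i + α) ^ 2 / N + 2) / 3)) := h2
            _ = _ := by ring
        have hRHSsum : Summable (fun i => α ^ 2 * (μ i * (f i + α) ^ 2 / N) - α ^ 2 * μ i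
            + 2 * (μ i * f i ^ 2)
            + μ i * f i ^ 2 * Real.log (((f i + α) ^ 2 / N + 2) / 3)) :=
          (((hs_sum.mul_left (α ^ 2)).sub (hμsum.mul_left (α ^ 2))).add
            (hfs.mul_left 2)).add hgl
        have hle := Summable.tsum_le_tsum hmaster hentN hRHSsum
        have hsum_s : ∑' i, μ i * (f i + α) ^ 2 / N = 1 := by
          rw [tsum_div_const, ← hNdef, div_self hNne]
        have hsplit : (∑' i, (α ^ 2 * (μ i * (f i + α) ^ 2 / N) - α ^ 2 * μ i
            + 2 * (μ i * f i ^ 2)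
            + μ i * f i ^ 2 * Real.log (((f i + α) ^ 2 / N + 2) / 3)))
            = α ^ 2 * 1 - α ^ 2 * 1 + 2 * K
              + ∑' i, μ i * f i ^ 2 * Real.log (((f i + α) ^ 2 / N + 2) / 3) := by
          rw [Summable.tsum_add (((hs_sum.mul_left (α ^ 2)).sub (hμsum.mul_left (α ^ 2))).add
              (hfs.mul_left 2)) hgl,
            Summable.tsum_add ((hs_sum.mul_left (α ^ 2)).sub (hμsum.mul_left (α ^ 2)))
              (hfs.mul_left 2),
            Summable.tsum_sub (hs_sum.mul_left (α ^ 2)) (hμsum.mul_left (α ^ 2)),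
            tsum_mul_left, tsum_mul_left, tsum_mul_left, hsum_s, hμ1, ← hKdef]
        -- Gibbs step
        have hgnn : ∀ i, (2/3 : ℝ) ≤ ((f i + α) ^ 2 / N + 2) / 3 := by
          intro i
          have hsnn : (0:ℝ) ≤ (f i + α) ^ 2 / N := div_nonneg (sq_nonneg _) hN.le
          linarith
        have hgsum : Summable (fun i => μ i * (((f i + α) ^ 2 / N + 2) / 3)) := by
          apply Summable.congr ((hs_sum.div_const 3).add (hμsum.mul_left (2/3)))
          intro i; ring
        have hsum_g : ∑' i, μ i * (((f i + α) ^ 2 / N + 2) / 3) = 1 := by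
          have hco : ∀ i, μ i * (((f i + α) ^ 2 / N + 2) / 3)
              = (μ i * (f i + α) ^ 2 / N) / 3 + (2/3) * μ i := fun i => by ring
          rw [tsum_congr hco, Summable.tsum_add (hs_sum.div_const 3) (hμsum.mul_left (2/3)),
            tsum_div_const, hsum_s, tsum_mul_left, hμ1]
          norm_num
        have hgibbs_pt : ∀ i, μ i * f i ^ 2 * Real.log (((f i + α) ^ 2 / N + 2) / 3) ≤
            μ i * f i ^ 2 * Real.log (f i ^ 2 / K)
              + (K * (μ i * (((f i + α) ^ 2 / N + 2) / 3)) - μ i * f i ^ 2) := by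
          intro i
          have hgpos : (0:ℝ) < ((f i + α) ^ 2 / N + 2) / 3 := lt_of_lt_of_le (by norm_num) (hgnn i)
          rcases eq_or_ne (μ i) 0 with hm | hm
          · rw [hm]; simp
          · have hμpos : 0 < μ i := lt_of_le_of_ne (hμ i) (Ne.symm hm)
            rcases eq_or_ne (f i) 0 with hf | hf
            · rw [hf]
              simp
              have hsnn0 : (0:ℝ) ≤ α ^ 2 / N := div_nonneg (sq_nonneg _) hN.le
              have hg2 : (0:ℝ) ≤ (α ^ 2 / N + 2) / 3 := by linarith
              have h0 := mul_nonneg hK.le (mul_nonneg (hμ i) hg2)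
              linarith [h0]
            · have hf2 : (0:ℝ) < f i ^ 2 := by positivity
              have hx : (0:ℝ) < ((f i + α) ^ 2 / N + 2) / 3 * K / f i ^ 2 := by positivity
              have hlog := Real.log_le_sub_one_of_pos hx
              have hsplit2 : Real.log (((f i + α) ^ 2 / N + 2) / 3 * K / f i ^ 2)
                  = Real.log (((f i + α) ^ 2 / N + 2) / 3) - Real.log (f i ^ 2 / K) := by
                rw [Real.log_div (by positivity : (((f i + α) ^ 2 / N + 2) / 3 * K : ℝ) ≠ 0) hf2.ne',
                  Real.log_mul hgpos.ne' (ne_of_gt hK), Real.log_div hf2.ne' (ne_of_gt hK)]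
                ring
              rw [hsplit2] at hlog
              have hmul := mul_le_mul_of_nonneg_left hlog
                (mul_nonneg (hμ i) (sq_nonneg (f i)))
              have hident : μ i * f i ^ 2 * (((f i + α) ^ 2 / N + 2) / 3 * K / f i ^ 2 - 1)
                  = K * (μ i * (((f i + α) ^ 2 / N + 2) / 3)) - μ i * f i ^ 2 := by
                field_simp
              nlinarith [hmul, hident]
        have hgibbs := Summable.tsum_le_tsum hgibbs_pt hgl (hE0.add ((hgsum.mul_left K).sub hfs))
        have hsplit3 : (∑' i, (μ i * f i ^ 2 * Real.log (f i ^ 2 / K)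
            + (K * (μ i * (((f i + α) ^ 2 / N + 2) / 3)) - μ i * f i ^ 2)))
            = E + (K * 1 - K) := by
          rw [Summable.tsum_add hE0 ((hgsum.mul_left K).sub hfs),
            Summable.tsum_sub (hgsum.mul_left K) hfs, tsum_mul_left, hsum_g, ← hKdef, ← hEdef]
        rw [hsplit3] at hgibbs
        rw [hsplit] at hle
        linarith
  -- conclude
  have hbdd : BddAbove (Set.range (fun α : ℝ => ∑' i, μ i * (f i + α) ^ 2 *
      Real.log ((f i + α) ^ 2 / ∑' j, μ j * (f j + α) ^ 2))) := by
    refine ⟨E + 2 * K, ?_⟩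
    rintro y ⟨α, rfl⟩
    exact per α
  constructor
  · have h0 := le_ciSup hbdd 0
    have hbody0 : (∑' i, μ i * (f i + (0:ℝ)) ^ 2 *
        Real.log ((f i + 0) ^ 2 / ∑' j, μ j * (f j + 0) ^ 2)) = E := by
      simp only [add_zero]
      rw [← hKdef, ← hEdef]
    calc E = _ := hbody0.symm
      _ ≤ _ := h0
  · exact ciSup_le per
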